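/- The double series ∑_{i=1}^∞ ∑_{j=1}^∞ μ(j) / (i^2 * j * φ(ij)) converges to ∏_{p prime} (1 - p/(p^3 - 1)). -/

import Mathlib

open ArithmeticFunction
open scoped ArithmeticFunction.Moebius ArithmeticFunction.zeta

/- ### Auxiliary definitions -/

/-- The summand as a function on `ℕ × ℕ`. -/
noncomputable def stW (x : ℕ × ℕ) : ℝ :=
  (μ x.2 : ℝ) / ((x.1 : ℝ) ^ 2 * (x.2 : ℝ) * (Nat.totient (x.1 * x.2) : ℝ))

/-- The arithmetic function obtained by summing `stW` over `divisorsAntidiagonal`. -/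
noncomputable def stF (n : ℕ) : ℝ := ∑ x ∈ n.divisorsAntidiagonal, stW x

/-- Numerator `∑_{d ∣ n} μ(d) d`. -/
noncomputable def stg (n : ℕ) : ℝ := ∑ d ∈ n.divisors, (μ d : ℝ) * d

lemma stF_zero : stF 0 = 0 := by simp [stF]

lemma stF_one : stF 1 = 1 := by
  simp [stF, stW, Nat.divisorsAntidiagonal_one]

lemma stF_eq {n : ℕ} (hn : n ≠ 0) : stF n = stg n / ((n : ℝ) ^ 2 * (Nat.totient n : ℝ)) := by
  have hφ : (0:ℝ) < (Nat.totient n : ℝ) := by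
    exact_mod_cast Nat.totient_pos.mpr (Nat.pos_of_ne_zero hn)
  rw [stF, show (∑ x ∈ n.divisorsAntidiagonal, stW x)
      = ∑ x ∈ n.divisorsAntidiagonal, (fun a b => stW (a, b)) x.1 x.2 from rfl,
    Nat.sum_divisorsAntidiagonal' (fun a b => stW (a, b)), stg, Finset.sum_div]
  refine Finset.sum_congr rfl fun d hd => ?_
  obtain ⟨hdvd, -⟩ := Nat.mem_divisors.mp hd
  have hd0 : d ≠ 0 := by rintro rfl; exact hn (Nat.eq_zero_of_zero_dvd hdvd)
  have hc0 : n / d ≠ 0 := Nat.div_ne_zero_iff.mpr ⟨hd0, Nat.le_of_dvd (Nat.pos_of_ne_zero hn) hdvd⟩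
  have hcd : (n / d) * d = n := Nat.div_mul_cancel hdvd
  have hcast : ((n / d : ℕ) : ℝ) * (d : ℝ) = (n : ℝ) := by exact_mod_cast congrArg Nat.cast hcd
  have hc0' : ((n / d : ℕ) : ℝ) ≠ 0 := Nat.cast_ne_zero.mpr hc0
  have hd0' : (d : ℝ) ≠ 0 := Nat.cast_ne_zero.mpr hd0
  rw [stW, hcd]
  dsimp only
  rw [div_eq_div_iff (by positivity) (by positivity), ← hcast]
  ring

/-- `stg` as an arithmetic function: `ζ * (μ ⬝ id)`. -/
noncomputable def stgAF : ArithmeticFunction ℝ :=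
  (ζ : ArithmeticFunction ℝ) *
    (ArithmeticFunction.pmul (μ : ArithmeticFunction ℝ)
      ((ArithmeticFunction.id : ArithmeticFunction ℕ) : ArithmeticFunction ℝ))

lemma stgAF_apply (n : ℕ) : stgAF n = stg n := by
  rw [stgAF, ArithmeticFunction.coe_zeta_mul_apply, stg]
  refine Finset.sum_congr rfl fun d _ => ?_
  simp [ArithmeticFunction.pmul_apply]

lemma stgAF_mult : stgAF.IsMultiplicative :=
  (ArithmeticFunction.isMultiplicative_zeta.natCast).mul
    ((ArithmeticFunction.isMultiplicative_moebius.intCast).pmul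
      (ArithmeticFunction.isMultiplicative_id.natCast))

lemma stg_mul {m n : ℕ} (h : Nat.Coprime m n) : stg (m * n) = stg m * stg n := by
  rw [← stgAF_apply, ← stgAF_apply, ← stgAF_apply]
  exact stgAF_mult.map_mul_of_coprime h

lemma stF_mul {m n : ℕ} (h : Nat.Coprime m n) : stF (m * n) = stF m * stF n := by
  rcases eq_or_ne m 0 with rfl | hm
  · have : n = 1 := Nat.coprime_zero_left n |>.mp h
    simp [this, stF_zero, stF_one]
  rcases eq_or_ne n 0 with rfl | hn
  · have : m = 1 := Nat.coprime_zero_right m |>.mp h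
    simp [this, stF_zero, stF_one]
  rw [stF_eq (Nat.mul_ne_zero hm hn), stF_eq hm, stF_eq hn, stg_mul h,
    Nat.totient_mul h, div_mul_div_comm]
  congr 1
  push_cast
  ring

lemma stg_prime_pow {p : ℕ} (hp : p.Prime) (e : ℕ) (he : e ≠ 0) :
    stg (p ^ e) = 1 - (p : ℝ) := by
  induction e with
  | zero => exact absurd rfl he
  | succ k ih =>
    have h1 : stg (p ^ (k + 1)) =
        ∑ i ∈ Finset.range (k + 2), ((μ (p ^ i) : ℝ) * ((p : ℝ) ^ i)) := by
      rw [stg, Nat.sum_divisors_prime_pow hp]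
      push_cast
      rfl
    rcases Nat.eq_zero_or_pos k with rfl | hk
    · rw [h1]
      simp [Finset.sum_range_succ, ArithmeticFunction.moebius_apply_prime hp]
      ring
    · rw [h1, Finset.sum_range_succ,
        ArithmeticFunction.moebius_apply_prime_pow hp (by omega : k + 1 ≠ 0)]
      have h2 : ∑ i ∈ Finset.range (k + 1), ((μ (p ^ i) : ℝ) * ((p : ℝ) ^ i)) = stg (p ^ k) := by
        rw [stg, Nat.sum_divisors_prime_pow hp]
        push_cast
        rfl
      rw [h2, ih (by omega)]
      simp [show ¬(k + 1 = 1) by omega]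
      exact fun h => absurd h (by omega)

lemma stF_prime_pow {p : ℕ} (hp : p.Prime) (k : ℕ) :
    stF (p ^ (k + 1)) = (-(p : ℝ) * ((p : ℝ) ^ 3)⁻¹) * (((p : ℝ) ^ 3)⁻¹) ^ k := by
  have hp0 : (p : ℝ) ≠ 0 := Nat.cast_ne_zero.mpr hp.pos.ne'
  have hp1 : (1 : ℝ) < (p : ℝ) := by exact_mod_cast hp.one_lt
  have hp1' : (p : ℝ) - 1 ≠ 0 := by linarith
  rw [stF_eq (pow_ne_zero _ hp.pos.ne'), stg_prime_pow hp _ (Nat.succ_ne_zero k),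
    Nat.totient_prime_pow hp (Nat.succ_pos k)]
  have hcast : ((p ^ (k + 1 - 1) * (p - 1) : ℕ) : ℝ) = (p : ℝ) ^ k * ((p : ℝ) - 1) := by
    push_cast [Nat.cast_sub hp.one_lt.le]
    ring_nf
  rw [hcast]
  push_cast
  field_simp
  ring_nf
  have hpk : (p : ℝ) ^ (k * 3) * (p : ℝ)⁻¹ ^ (k * 3) = 1 := by
    rw [← mul_pow, mul_inv_cancel₀ hp0, one_pow]
  rw [mul_assoc ((p : ℝ) ^ 2), hpk, mul_assoc ((p : ℝ) ^ 3), hpk]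
  ring

lemma stF_local {p : ℕ} (hp : p.Prime) :
    HasSum (fun e : ℕ => stF (p ^ e)) (1 - (p : ℝ) / ((p : ℝ) ^ 3 - 1)) := by
  have hp0 : (0:ℝ) < (p : ℝ) := by exact_mod_cast hp.pos
  have hp2 : (2:ℝ) ≤ (p : ℝ) := by exact_mod_cast hp.two_le
  have h8 : (8:ℝ) ≤ (p : ℝ) ^ 3 := by
    calc (8:ℝ) = 2 ^ 3 := by norm_num
    _ ≤ (p : ℝ) ^ 3 := by gcongr
  have hr0 : (0:ℝ) ≤ ((p : ℝ) ^ 3)⁻¹ := by positivity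
  have hr1 : ((p : ℝ) ^ 3)⁻¹ < 1 := by
    rw [inv_lt_one_iff₀]; right; linarith
  have hgeo := (hasSum_geometric_of_lt_one hr0 hr1).mul_left (-(p : ℝ) * ((p : ℝ) ^ 3)⁻¹)
  have h1 : HasSum (fun k : ℕ => stF (p ^ (k + 1)))
      (-(p : ℝ) * ((p : ℝ) ^ 3)⁻¹ * (1 - ((p : ℝ) ^ 3)⁻¹)⁻¹) := by
    simpa only [stF_prime_pow hp] using hgeo
  have h2 := (hasSum_nat_add_iff (f := fun e : ℕ => stF (p ^ e)) 1).mp h1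
  have hval : -(p : ℝ) * ((p : ℝ) ^ 3)⁻¹ * (1 - ((p : ℝ) ^ 3)⁻¹)⁻¹
      + ∑ i ∈ Finset.range 1, stF (p ^ i) = 1 - (p : ℝ) / ((p : ℝ) ^ 3 - 1) := by
    have h3 : (p : ℝ) ^ 3 ≠ 0 := by positivity
    have h4 : (p : ℝ) ^ 3 - 1 ≠ 0 := by nlinarith
    rw [Finset.sum_range_one, pow_zero, stF_one]
    field_simp
    ring
  rwa [hval] at h2

lemma st_prime_pow_le {p k : ℕ} (hp : p.Prime) (hk : k ≠ 0) :
    p ^ k ≤ (if p = 2 then 2 else 1) * (p ^ (k - 1) * (p - 1)) ^ 2 := by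
  obtain ⟨j, rfl⟩ : ∃ j, k = j + 1 := ⟨k - 1, by omega⟩
  simp only [Nat.add_sub_cancel]
  rcases eq_or_ne p 2 with rfl | hp2
  · have h2 : (if (2:ℕ) = 2 then 2 else 1) * ((2:ℕ) ^ j * (2 - 1)) ^ 2 = 2 ^ (j * 2 + 1) := by
      norm_num [← pow_mul, ← pow_succ']
    rw [h2]
    exact Nat.pow_le_pow_right (by norm_num) (by omega)
  · have hp3 : 3 ≤ p := by have := hp.two_le; omega
    obtain ⟨q, rfl⟩ : ∃ q, p = q + 3 := ⟨p - 3, by omega⟩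
    simp only [if_neg hp2, one_mul, show q + 3 - 1 = q + 2 from rfl]
    rw [mul_pow, ← pow_mul]
    calc (q + 3) ^ (j + 1) = (q + 3) ^ j * (q + 3) := pow_succ _ _
      _ ≤ (q + 3) ^ (j * 2) * (q + 2) ^ 2 := by
          apply Nat.mul_le_mul
          · exact Nat.pow_le_pow_right (by omega) (by omega)
          · nlinarith
  
lemma st_totient_key (n : ℕ) : n ≤ 2 * Nat.totient n ^ 2 := by
  rcases eq_or_ne n 0 with rfl | hn
  · simp
  have hfac := Nat.factorization_prod_pow_eq_self hn
  rw [Nat.totient_eq_prod_factorization hn]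
  rw [Finsupp.prod] at hfac ⊢
  calc n = ∏ p ∈ n.factorization.support, p ^ n.factorization p := hfac.symm
    _ ≤ ∏ p ∈ n.factorization.support,
        ((if p = 2 then 2 else 1) * (p ^ (n.factorization p - 1) * (p - 1)) ^ 2) := by
        refine Finset.prod_le_prod' fun p hp => ?_
        have hpp : p.Prime := Nat.prime_of_mem_primeFactors
          (by rwa [← Nat.support_factorization])
        exact st_prime_pow_le hpp (Finsupp.mem_support_iff.mp hp)
    _ = (∏ p ∈ n.factorization.support, if p = 2 then 2 else 1) *
        (∏ p ∈ n.factorization.support, p ^ (n.factorization p - 1) * (p - 1)) ^ 2 := by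
        rw [Finset.prod_mul_distrib, Finset.prod_pow]
    _ ≤ 2 * (∏ p ∈ n.factorization.support, p ^ (n.factorization p - 1) * (p - 1)) ^ 2 := by
        refine Nat.mul_le_mul_right _ ?_
        rw [Finset.prod_ite_eq' n.factorization.support 2 (fun _ => 2)]
        split <;> omega

lemma st_summable_inv_mul_totient :
    Summable (fun n : ℕ => ((n * Nat.totient n : ℕ) : ℝ)⁻¹) := by
  have hs : Summable (fun n : ℕ => Real.sqrt 2 * (((n : ℝ) ^ (3/2 : ℝ))⁻¹)) :=
    (Real.summable_nat_rpow_inv.mpr (by norm_num)).mul_left _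
  refine Summable.of_nonneg_of_le (fun n => by positivity) (fun n => ?_) hs
  rcases eq_or_ne n 0 with rfl | hn
  · simp
  have hnp : 0 < n := Nat.pos_of_ne_zero hn
  have hφp : 0 < Nat.totient n := Nat.totient_pos.mpr hnp
  have ha : (0:ℝ) < ((n * Nat.totient n : ℕ) : ℝ) := by
    exact_mod_cast Nat.mul_pos hnp hφp
  have hb : (0:ℝ) < (n : ℝ) ^ (3/2 : ℝ) :=
    Real.rpow_pos_of_pos (by exact_mod_cast hnp) _
  have hnat : n ^ 3 ≤ 2 * (n * Nat.totient n) ^ 2 := by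
    nlinarith [st_totient_key n, sq_nonneg n, Nat.pos_of_ne_zero hn]
  have hkey : (n : ℝ) ^ (3/2 : ℝ) ≤ Real.sqrt 2 * ((n * Nat.totient n : ℕ) : ℝ) := by
    have h1 : (n : ℝ) ^ (3/2 : ℝ) = Real.sqrt ((n : ℝ) ^ 3) := by
      rw [Real.sqrt_eq_rpow, ← Real.rpow_natCast (n : ℝ) 3, ← Real.rpow_mul (Nat.cast_nonneg n)]
      norm_num
    have h2 : ((n : ℝ) ^ 3) ≤ (Real.sqrt 2 * ((n * Nat.totient n : ℕ) : ℝ)) ^ 2 := by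
      rw [mul_pow, Real.sq_sqrt (by norm_num : (0:ℝ) ≤ 2)]
      exact_mod_cast hnat
    rw [h1]
    calc Real.sqrt ((n : ℝ) ^ 3)
        ≤ Real.sqrt ((Real.sqrt 2 * ((n * Nat.totient n : ℕ) : ℝ)) ^ 2) := Real.sqrt_le_sqrt h2
      _ = _ := Real.sqrt_sq (by positivity)
  rw [inv_eq_one_div, inv_eq_one_div, mul_one_div, div_le_div_iff₀ ha hb]
  linarith [hkey]

lemma st_summable_abs :
    Summable (fun x : ℕ+ × ℕ+ => ‖stW ((x.1 : ℕ), (x.2 : ℕ))‖) := by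
  have hf : Summable (fun i : ℕ+ => (((i : ℕ) : ℝ) ^ 2)⁻¹) := by
    have h := Real.summable_nat_pow_inv.mpr (by norm_num : 1 < 2)
    exact h.comp_injective PNat.coe_injective
  have hg : Summable (fun j : ℕ+ => ((((j : ℕ) * Nat.totient (j : ℕ)) : ℕ) : ℝ)⁻¹) :=
    st_summable_inv_mul_totient.comp_injective PNat.coe_injective
  have hprod := hf.mul_of_nonneg hg (fun i => by positivity) (fun j => by positivity)
  refine Summable.of_nonneg_of_le (fun x => norm_nonneg _) (fun x => ?_) hprod
  obtain ⟨i, j⟩ := x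
  set a := (i : ℕ) with hadef
  set b := (j : ℕ) with hbdef
  have ha0 : 0 < a := i.pos
  have hb0 : 0 < b := j.pos
  have hφab : 0 < Nat.totient (a * b) := Nat.totient_pos.mpr (Nat.mul_pos ha0 hb0)
  have hφb : 0 < Nat.totient b := Nat.totient_pos.mpr hb0
  have hφle : Nat.totient b ≤ Nat.totient (a * b) :=
    Nat.le_of_dvd hφab (Nat.totient_dvd_of_dvd (dvd_mul_left b a))
  have hD : (0:ℝ) < (a : ℝ) ^ 2 * (b : ℝ) * (Nat.totient (a * b) : ℝ) := by
    have h1 : (0:ℝ) < (Nat.totient (a * b) : ℝ) := by exact_mod_cast hφab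
    have h2 : (0:ℝ) < (b : ℝ) := by exact_mod_cast hb0
    have h3 : (0:ℝ) < (a : ℝ) ^ 2 := by positivity
    exact mul_pos (mul_pos h3 h2) h1
  have habs : |((μ b : ℤ) : ℝ)| ≤ 1 := by
    exact_mod_cast (abs_moebius_le_one (n := b))
  have hden : (a : ℝ) ^ 2 * (((b * Nat.totient b : ℕ)) : ℝ) ≤
      (a : ℝ) ^ 2 * (b : ℝ) * (Nat.totient (a * b) : ℝ) := by
    push_cast
    rw [← mul_assoc]
    gcongr
  have hDsm : (0:ℝ) < (a : ℝ) ^ 2 * (((b * Nat.totient b : ℕ)) : ℝ) := by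
    have : (0:ℝ) < ((b * Nat.totient b : ℕ) : ℝ) := by exact_mod_cast Nat.mul_pos hb0 hφb
    positivity
  calc ‖stW (a, b)‖
      = |((μ b : ℤ) : ℝ)| / ((a : ℝ) ^ 2 * (b : ℝ) * (Nat.totient (a * b) : ℝ)) := by
        rw [stW, norm_div, Real.norm_eq_abs, Real.norm_eq_abs, abs_of_pos hD]
    _ ≤ 1 / ((a : ℝ) ^ 2 * (b : ℝ) * (Nat.totient (a * b) : ℝ)) := by gcongr
    _ ≤ 1 / ((a : ℝ) ^ 2 * (((b * Nat.totient b : ℕ)) : ℝ)) :=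
        one_div_le_one_div_of_le hDsm hden
    _ = ((a : ℝ) ^ 2)⁻¹ * (((b * Nat.totient b : ℕ)) : ℝ)⁻¹ := by
        rw [one_div, mul_inv]

lemma st_fst_pos {n : ℕ} {x : ℕ × ℕ} (h : x ∈ n.divisorsAntidiagonal) : 0 < x.1 := by
  obtain ⟨h1, h2⟩ := Nat.mem_divisorsAntidiagonal.mp h
  exact Nat.pos_of_ne_zero fun h0 => h2 (by rw [← h1, h0, zero_mul])

lemma st_snd_pos {n : ℕ} {x : ℕ × ℕ} (h : x ∈ n.divisorsAntidiagonal) : 0 < x.2 := by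
  obtain ⟨h1, h2⟩ := Nat.mem_divisorsAntidiagonal.mp h
  exact Nat.pos_of_ne_zero fun h0 => h2 (by rw [← h1, h0, mul_zero])

/-- The bijection between `ℕ+ × ℕ+` and pairs grouped by their product. -/
def stE : ℕ+ × ℕ+ ≃ Σ n : ℕ, {x : ℕ × ℕ // x ∈ n.divisorsAntidiagonal} where
  toFun x := ⟨(x.1 : ℕ) * (x.2 : ℕ), ⟨((x.1 : ℕ), (x.2 : ℕ)), by
    rw [Nat.mem_divisorsAntidiagonal]
    exact ⟨rfl, by positivity⟩⟩⟩
  invFun s := (⟨s.2.1.1, st_fst_pos s.2.2⟩, ⟨s.2.1.2, st_snd_pos s.2.2⟩)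
  left_inv x := rfl
  right_inv := by
    rintro ⟨n, ⟨⟨a, b⟩, h⟩⟩
    obtain ⟨h1, -⟩ := Nat.mem_divisorsAntidiagonal.mp h
    subst h1
    rfl

set_option maxHeartbeats 1000000 in
theorem double_sum_eq_stephens_constant :
    HasSum
      (fun p : ℕ+ × ℕ+ =>
        (μ (p.2 : ℕ) : ℝ) /
          ((p.1 : ℕ) ^ 2 * (p.2 : ℕ) * (Nat.totient ((p.1 : ℕ) * (p.2 : ℕ))) : ℝ))
      (∏' q : Nat.Primes, (1 - (q : ℕ) / (((q : ℕ) : ℝ) ^ 3 - 1))) := by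
  classical
  set T : ℕ+ × ℕ+ → ℝ := fun x => stW ((x.1 : ℕ), (x.2 : ℕ)) with hT
  have habs := st_summable_abs
  have hsum : Summable T := habs.of_norm
  have hsig : Summable (fun s : Σ n : ℕ, {x : ℕ × ℕ // x ∈ n.divisorsAntidiagonal} =>
      T (stE.symm s)) := stE.symm.summable_iff.mpr hsum
  have hfib : ∀ n : ℕ, HasSum
      (fun c : {x : ℕ × ℕ // x ∈ n.divisorsAntidiagonal} => T (stE.symm ⟨n, c⟩)) (stF n) := by
    intro n
    have h1 := hasSum_fintype
      (fun c : {x : ℕ × ℕ // x ∈ n.divisorsAntidiagonal} => T (stE.symm ⟨n, c⟩))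
    convert h1 using 1
    rw [stF, ← Finset.sum_coe_sort n.divisorsAntidiagonal stW]
    exact Finset.sum_congr rfl fun c _ => rfl
  have hFsum : HasSum stF (∑' s, T (stE.symm s)) := hsig.hasSum.sigma hfib
  have hnorm : Summable (fun n => ‖stF n‖) := by
    have hsign : Summable (fun s : Σ n : ℕ, {x : ℕ × ℕ // x ∈ n.divisorsAntidiagonal} =>
        ‖T (stE.symm s)‖) := stE.symm.summable_iff.mpr habs
    have hH := hsign.sigma
    refine Summable.of_nonneg_of_le (fun n => norm_nonneg _) (fun n => ?_) hH
    have h2 : stF n = ∑' c, T (stE.symm ⟨n, c⟩) := (hfib n).tsum_eq.symm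
    rw [h2]
    exact norm_tsum_le_tsum_norm (by apply Summable.of_finite)
  have hEuler := EulerProduct.eulerProduct_hasProd (f := stF) stF_one
    (fun {m n} h => stF_mul h) hnorm stF_zero
  have hloc : (fun p : Nat.Primes => ∑' e : ℕ, stF ((p : ℕ) ^ e)) =
      fun p : Nat.Primes => 1 - (p : ℕ) / (((p : ℕ) : ℝ) ^ 3 - 1) :=
    funext fun p => (stF_local p.prop).tsum_eq
  rw [hloc] at hEuler
  have hfinal : HasSum T (∏' q : Nat.Primes, (1 - (q : ℕ) / (((q : ℕ) : ℝ) ^ 3 - 1))) := by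
    rw [hEuler.tprod_eq, hFsum.tsum_eq, stE.symm.tsum_eq]
    exact hsum.hasSum
  exact hfinal
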